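/- Every critical point of the del Pezzo superpotential W(x₁,…,xₙ) = Σⱼ xⱼ + Σⱼ 1/xⱼ + Πⱼ xⱼ + Πⱼ 1/xⱼ on (ℂ*)^n, with n even, is non-degenerate: the Hessian matrix (∂²W/∂xⱼ∂xₖ) is invertible at every critical point. -/

import Mathlib

open Finset


/-- Partial derivative of `f` at `x` in the `i`-th coordinate direction. -/
noncomputable def pgrad {n : ℕ} (f : (Fin n → ℂ) → ℂ) (x : Fin n → ℂ)
    (i : Fin n) : ℂ :=
  fderiv ℂ f x (Pi.single i 1)

/-- Hessian matrix of second partial derivatives of `f` at `x`. -/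
noncomputable def pHess {n : ℕ} (f : (Fin n → ℂ) → ℂ) (x : Fin n → ℂ) :
    Matrix (Fin n) (Fin n) ℂ :=
  Matrix.of fun i j => fderiv ℂ (fun y => pgrad f y j) x (Pi.single i 1)


namespace S15
variable {n : ℕ}

noncomputable def pj (i : Fin n) : (Fin n → ℂ) →L[ℂ] ℂ := ContinuousLinearMap.proj i

noncomputable def g (y : Fin n → ℂ) (j : Fin n) : ℂ :=
  1 + (-((y j)^2)⁻¹) + (∏ k ∈ univ.erase j, y k)
    + (∏ k ∈ univ.erase j, (y k)⁻¹) * (-((y j)^2)⁻¹)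

noncomputable def Hent (x : Fin n → ℂ) (i j : Fin n) : ℂ :=
  if i = j then 2 * (x j)⁻¹^3 + 2 * (x j)⁻¹^2 * (∏ k, (x k)⁻¹)
  else (∏ k, x k) * ((x i)⁻¹ * (x j)⁻¹) + (∏ k, (x k)⁻¹) * ((x i)⁻¹ * (x j)⁻¹)

lemma hasW (y : Fin n → ℂ) (hy : ∀ i, y i ≠ 0) :
    HasFDerivAt (𝕜 := ℂ)
      (fun y : Fin n → ℂ => (∑ j, y j) + (∑ j, (y j)⁻¹) + (∏ j, y j) + (∏ j, (y j)⁻¹))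
      ((∑ j, pj j) + (∑ j, (-((y j)^2)⁻¹) • pj j)
        + (∑ i, (∏ k ∈ univ.erase i, y k) • pj i)
        + (∑ i, (∏ k ∈ univ.erase i, (y k)⁻¹) • ((-((y i)^2)⁻¹) • pj i))) y := by
  have h1 : HasFDerivAt (𝕜 := ℂ) (fun y : Fin n → ℂ => ∑ j, y j) (∑ j, pj j) y :=
    HasFDerivAt.fun_sum (fun j _ => (pj j).hasFDerivAt)
  have h2 : HasFDerivAt (𝕜 := ℂ) (fun y : Fin n → ℂ => ∑ j, (y j)⁻¹)
      (∑ j, (-((y j)^2)⁻¹) • pj j) y :=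
    HasFDerivAt.fun_sum (fun j _ =>
      (hasDerivAt_inv (hy j)).comp_hasFDerivAt y (pj j).hasFDerivAt)
  have h3 : HasFDerivAt (𝕜 := ℂ) (fun y : Fin n → ℂ => ∏ j, y j)
      (∑ i, (∏ k ∈ univ.erase i, y k) • pj i) y :=
    HasFDerivAt.finset_prod (fun i _ => (pj i).hasFDerivAt)
  have h4 : HasFDerivAt (𝕜 := ℂ) (fun y : Fin n → ℂ => ∏ j, (y j)⁻¹)
      (∑ i, (∏ k ∈ univ.erase i, (y k)⁻¹) • ((-((y i)^2)⁻¹) • pj i)) y :=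
    HasFDerivAt.finset_prod (fun i _ =>
      (hasDerivAt_inv (hy i)).comp_hasFDerivAt y (pj i).hasFDerivAt)
  exact ((h1.add h2).add h3).add h4

lemma pgrad_eq (W : (Fin n → ℂ) → ℂ)
    (hW : ∀ x, W x = (∑ j, x j) + (∑ j, (x j)⁻¹) + (∏ j, x j) + (∏ j, (x j)⁻¹))
    (y : Fin n → ℂ) (hy : ∀ i, y i ≠ 0) (j : Fin n) :
    pgrad W y j = g y j := by
  have hWf : W = fun x => (∑ j, x j) + (∑ j, (x j)⁻¹) + (∏ j, x j) + (∏ j, (x j)⁻¹) :=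
    funext hW
  rw [pgrad, hWf, (hasW y hy).fderiv]
  simp [pj, g, Pi.single_apply, mul_comm]

lemma hasG (x : Fin n → ℂ) (hx : ∀ i, x i ≠ 0) (j : Fin n) :
    HasFDerivAt (𝕜 := ℂ) (fun y => g y j)
      ((0 + (-(-(2 * x j ^ 1) / ((x j) ^ 2) ^ 2)) • pj j
        + (∑ i ∈ univ.erase j, (∏ k ∈ (univ.erase j).erase i, x k) • pj i))
        + (((∏ k ∈ univ.erase j, (x k)⁻¹) •
              ((-(-(2 * x j ^ 1) / ((x j) ^ 2) ^ 2)) • pj j))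
          + (-((x j)^2)⁻¹) •
              (∑ i ∈ univ.erase j, (∏ k ∈ (univ.erase j).erase i, (x k)⁻¹) •
                ((-((x i)^2)⁻¹) • pj i)))) x := by
  have h2 : HasFDerivAt (𝕜 := ℂ) (fun y : Fin n → ℂ => -((y j)^2)⁻¹)
      ((-(-(2 * x j ^ 1) / ((x j) ^ 2) ^ 2)) • pj j) x := by
    have hd : HasDerivAt (fun t : ℂ => -((t)^2)⁻¹)
        (-(-(2 * x j ^ 1) / ((x j) ^ 2) ^ 2)) (x j) := by
      simpa [Pi.neg_def, Pi.inv_def] using (((hasDerivAt_pow 2 (x j)).inv (pow_ne_zero 2 (hx j))).neg)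
    exact hd.comp_hasFDerivAt (f := fun y : Fin n → ℂ => y j) x (pj j).hasFDerivAt
  have h3 : HasFDerivAt (𝕜 := ℂ) (fun y : Fin n → ℂ => ∏ k ∈ univ.erase j, y k)
      (∑ i ∈ univ.erase j, (∏ k ∈ (univ.erase j).erase i, x k) • pj i) x :=
    HasFDerivAt.finset_prod (fun i _ => (pj i).hasFDerivAt)
  have h4a : HasFDerivAt (𝕜 := ℂ) (fun y : Fin n → ℂ => ∏ k ∈ univ.erase j, (y k)⁻¹)
      (∑ i ∈ univ.erase j, (∏ k ∈ (univ.erase j).erase i, (x k)⁻¹) •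
        ((-((x i)^2)⁻¹) • pj i)) x :=
    HasFDerivAt.finset_prod (fun i _ =>
      (hasDerivAt_inv (hx i)).comp_hasFDerivAt x (pj i).hasFDerivAt)
  have h1 : HasFDerivAt (𝕜 := ℂ) (fun _ : Fin n → ℂ => (1:ℂ)) 0 x := hasFDerivAt_const 1 x
  exact ((h1.add h2).add h3).add (h4a.mul h2)

lemma eval_single (s : Finset (Fin n)) (c : Fin n → ℂ) (i : Fin n) :
    (∑ i' ∈ s, c i' • pj i') (Pi.single i 1) = if i ∈ s then c i else 0 := by
  rw [ContinuousLinearMap.sum_apply]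
  simp [pj, Pi.single_apply, mul_ite, Finset.sum_ite_eq']

lemma hessEntry (x : Fin n → ℂ) (hx : ∀ i, x i ≠ 0) (i j : Fin n) :
    fderiv ℂ (fun y => g y j) x (Pi.single i 1) = Hent x i j := by
  rw [(hasG x hx j).fderiv]
  simp only [Finset.smul_sum, smul_smul]
  rw [ContinuousLinearMap.add_apply, ContinuousLinearMap.add_apply,
    ContinuousLinearMap.add_apply, ContinuousLinearMap.add_apply,
    ContinuousLinearMap.zero_apply, eval_single, eval_single]
  simp only [ContinuousLinearMap.smul_apply, pj, ContinuousLinearMap.proj_apply,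
    Pi.single_apply, smul_eq_mul]
  by_cases hij : i = j
  · subst hij
    have hp : (x i)⁻¹ * ∏ k ∈ univ.erase i, (x k)⁻¹ = ∏ k, (x k)⁻¹ :=
      Finset.mul_prod_erase univ (fun k => (x k)⁻¹) (mem_univ i)
    have h1 : x i * (x i)⁻¹ = 1 := mul_inv_cancel₀ (hx i)
    simp only [Hent, if_pos rfl, Finset.mem_erase, ne_eq, not_true_eq_false, false_and,
      if_false, if_true, mul_one, add_zero, zero_add]
    rw [← hp]
    linear_combination (-(2*(1 + ∏ k ∈ univ.erase i, (x k)⁻¹) * x i * (x i)⁻¹^4) *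
      ((x i * (x i)⁻¹)^2 + x i * (x i)⁻¹ + 1)) * h1
      + (2*(1 + ∏ k ∈ univ.erase i, (x k)⁻¹) * (x i)⁻¹^3) *
        ((x i * (x i)⁻¹)^3 + (x i * (x i)⁻¹)^2 + x i * (x i)⁻¹ + 1) * h1
  · have hi' : i ∈ univ.erase j := by simp [hij]
    have hp1 : x i * ∏ k ∈ (univ.erase j).erase i, x k = ∏ k ∈ univ.erase j, x k :=
      Finset.mul_prod_erase _ _ hi'
    have hp2 : x j * ∏ k ∈ univ.erase j, x k = ∏ k, x k :=
      Finset.mul_prod_erase univ _ (mem_univ j)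
    have hq1 : (x i)⁻¹ * ∏ k ∈ (univ.erase j).erase i, (x k)⁻¹ = ∏ k ∈ univ.erase j, (x k)⁻¹ :=
      Finset.mul_prod_erase _ (fun k => (x k)⁻¹) hi'
    have hq2 : (x j)⁻¹ * ∏ k ∈ univ.erase j, (x k)⁻¹ = ∏ k, (x k)⁻¹ :=
      Finset.mul_prod_erase univ (fun k => (x k)⁻¹) (mem_univ j)
    have h1 : x i * (x i)⁻¹ = 1 := mul_inv_cancel₀ (hx i)
    have h2 : x j * (x j)⁻¹ = 1 := mul_inv_cancel₀ (hx j)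
    simp only [Hent, if_neg hij, if_pos hi', if_neg (Ne.symm hij), mul_one, mul_zero,
      add_zero, zero_add]
    rw [← hp2, ← hp1, ← hq2, ← hq1]
    linear_combination (-(∏ k ∈ (univ.erase j).erase i, x k) * (x j * (x j)⁻¹)) * h1
      + (-(∏ k ∈ (univ.erase j).erase i, x k)) * h2

lemma pHess_eq (W : (Fin n → ℂ) → ℂ)
    (hW : ∀ x, W x = (∑ j, x j) + (∑ j, (x j)⁻¹) + (∏ j, x j) + (∏ j, (x j)⁻¹))
    (x : Fin n → ℂ) (hx : ∀ i, x i ≠ 0) (i j : Fin n) :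
    pHess W x i j = Hent x i j := by
  have hU : IsOpen {y : Fin n → ℂ | ∀ i, y i ≠ 0} := by
    have : {y : Fin n → ℂ | ∀ i, y i ≠ 0} = ⋂ i, (fun y : Fin n → ℂ => y i) ⁻¹' {0}ᶜ := by
      ext y; simp
    rw [this]
    exact isOpen_iInter_of_finite fun i =>
      IsOpen.preimage (continuous_apply i) isOpen_compl_singleton
  have hev : (fun y => pgrad W y j) =ᶠ[nhds x] (fun y => g y j) :=
    Filter.eventuallyEq_of_mem (hU.mem_nhds hx) (fun y hy => pgrad_eq W hW y hy j)
  show fderiv ℂ (fun y => pgrad W y j) x (Pi.single i 1) = Hent x i j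
  rw [hev.fderiv_eq, hessEntry x hx i j]

lemma key (n : ℕ) (hn : Even n)
    (x : Fin n → ℂ) (hx : ∀ i, x i ≠ 0)
    (hg : ∀ i, g x i = 0)
    (H : Matrix (Fin n) (Fin n) ℂ)
    (hH : ∀ i j, H i j = Hent x i j) :
    H.det ≠ 0 := by
  simp only [g] at hg
  simp only [Hent] at hH
  set P : ℂ := ∏ k, x k with hP
  set Q : ℂ := ∏ k, (x k)⁻¹ with hQdef
  set u : Fin n → ℂ := fun i => x i + (x i)⁻¹ with hu_def
  set v : Fin n → ℂ := fun i => (x i)⁻¹ with hv_def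
  have hPQ : P * Q = 1 := by
    rw [hP, hQdef, ← Finset.prod_mul_distrib]
    exact Finset.prod_eq_one fun i _ => mul_inv_cancel₀ (hx i)
  have hone : ∀ i, x i * (x i)⁻¹ = 1 := fun i => mul_inv_cancel₀ (hx i)
  have hcrit' : ∀ i, x i - (x i)⁻¹ = Q - P := by
    intro i
    have ha : x i * ∏ k ∈ univ.erase i, x k = P := Finset.mul_prod_erase univ _ (mem_univ i)
    have hb : (x i)⁻¹ * ∏ k ∈ univ.erase i, (x k)⁻¹ = Q :=
      Finset.mul_prod_erase univ (fun k => (x k)⁻¹) (mem_univ i)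
    linear_combination (x i) * hg i - ha + hb
      + ((x i)⁻¹ + (x i)⁻¹ * (∏ k ∈ univ.erase i, (x k)⁻¹)) * hone i
  have hu2 : ∀ i, u i ^ 2 = (P + Q) ^ 2 := by
    intro i
    simp only [hu_def]
    linear_combination (x i - (x i)⁻¹ + Q - P) * hcrit' i + 4 * hone i - 4 * hPQ
  have hc : P + Q ≠ 0 := by
    intro hc0
    have hui : ∀ i, x i + (x i)⁻¹ = 0 := by
      intro i
      have := hu2 i
      rw [hc0] at this
      simpa [hu_def] using pow_eq_zero_iff (n := 2) (by norm_num) |>.mp (by simpa using this)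
    have hQn : Q = -P := by linear_combination hc0
    have hP2 : P ^ 2 = -1 := by
      rw [hQn] at hPQ; linear_combination -hPQ
    have hxP : ∀ i, x i = -P := by
      intro i
      linear_combination (1/2 : ℂ) * hcrit' i + (1/2 : ℂ) * hui i + (1/2 : ℂ) * hQn
    obtain ⟨m, hm⟩ := hn
    have hPn : P = (-1 : ℂ) ^ m := by
      calc P = ∏ k : Fin n, x k := hP
        _ = ∏ _k : Fin n, (-P) := Finset.prod_congr rfl fun k _ => hxP k
        _ = (-P) ^ n := by rw [Finset.prod_const, Finset.card_univ, Fintype.card_fin]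
        _ = ((-P) ^ 2) ^ m := by rw [← pow_mul, hm, two_mul]
        _ = (P ^ 2) ^ m := by ring
        _ = (-1 : ℂ) ^ m := by rw [hP2]
    have h1 : P ^ 2 = 1 := by
      rw [hPn, ← pow_mul, mul_comm, pow_mul]
      norm_num
    rw [hP2] at h1
    norm_num at h1
  have hu0 : ∀ i, u i ≠ 0 := by
    intro i h
    apply hc
    have := hu2 i
    rw [h] at this
    exact pow_eq_zero_iff (n := 2) (by norm_num) |>.mp (by simpa using this.symm)
  have hHd : H = Matrix.diagonal v *
      (Matrix.diagonal u + Matrix.of (fun _ _ => P + Q)) * Matrix.diagonal v := by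
    ext i j
    rw [Matrix.mul_diagonal, Matrix.diagonal_mul, Matrix.add_apply, Matrix.of_apply,
      hH i j]
    by_cases hij : i = j
    · subst hij
      simp only [eq_self_iff_true, if_true, hv_def, hu_def, Matrix.diagonal_apply_eq]
      linear_combination (-(x i)⁻¹^2) * hcrit' i
    · simp only [if_neg hij, hv_def, Matrix.diagonal_apply_ne _ hij]
      ring
  have hv' : (∏ i, v i) ≠ 0 := Finset.prod_ne_zero_iff.mpr fun i _ => inv_ne_zero (hx i)
  have hu' : (∏ i, u i) ≠ 0 := Finset.prod_ne_zero_iff.mpr fun i _ => hu0 i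
  have hJ : (Matrix.of fun _ _ : Fin n => P + Q) =
      Matrix.replicateCol Unit (fun _ : Fin n => P + Q) * Matrix.replicateRow Unit (fun _ : Fin n => (1:ℂ)) := by
    ext i j; simp [Matrix.mul_apply]
  have hAdet : IsUnit (Matrix.diagonal u).det := by
    rw [Matrix.det_diagonal]; exact isUnit_iff_ne_zero.mpr hu'
  have hsmall : ((1 + Matrix.replicateRow Unit (fun _ : Fin n => (1:ℂ)) * (Matrix.diagonal u)⁻¹ *
      Matrix.replicateCol Unit (fun _ : Fin n => P + Q) : Matrix Unit Unit ℂ)).det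
        = 1 + ∑ i, (P + Q) * (u i)⁻¹ := by
    have hRinv : Ring.inverse u = fun i => (u i)⁻¹ := by
      have hU : Ring.inverse ((⟨u, fun i => (u i)⁻¹,
          funext fun i => mul_inv_cancel₀ (hu0 i),
          funext fun i => inv_mul_cancel₀ (hu0 i)⟩ : (Fin n → ℂ)ˣ) : Fin n → ℂ)
          = fun i => (u i)⁻¹ := Ring.inverse_unit _
      exact hU
    rw [Matrix.det_unique, Matrix.inv_diagonal, hRinv]
    simp [Matrix.mul_apply, Matrix.diagonal_apply, Finset.sum_ite_eq, mul_comm]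
  have hdich : ∀ i, (P + Q) * (u i)⁻¹ = 1 ∨ (P + Q) * (u i)⁻¹ = -1 := by
    intro i
    have h1 : u i * (u i)⁻¹ = 1 := mul_inv_cancel₀ (hu0 i)
    have hss : ((P + Q) * (u i)⁻¹) * ((P + Q) * (u i)⁻¹) = 1 := by
      linear_combination (-(u i)⁻¹^2) * hu2 i + (u i * (u i)⁻¹ + 1) * h1
    exact mul_self_eq_one_iff.mp hss
  set k := (univ.filter (fun i => (P + Q) * (u i)⁻¹ = -1)).card with hk
  have hkn : k ≤ n := le_trans (Finset.card_filter_le _ _) (by simp)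
  have hcard : (univ.filter (fun i => ¬((P + Q) * (u i)⁻¹ = -1))).card = n - k := by
    have := Finset.card_filter_add_card_filter_not
      (s := (univ : Finset (Fin n))) (p := fun i => (P + Q) * (u i)⁻¹ = -1)
    simp only [Finset.card_univ, Fintype.card_fin] at this
    omega
  have hsum : ∑ i, (P + Q) * (u i)⁻¹ = ((n : ℂ) - 2 * k) := by
    rw [← Finset.sum_filter_add_sum_filter_not univ (fun i => (P + Q) * (u i)⁻¹ = -1)]
    rw [Finset.sum_congr rfl (fun i hi => (Finset.mem_filter.mp hi).2),
      Finset.sum_congr rfl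
        (fun i hi => (hdich i).resolve_right (Finset.mem_filter.mp hi).2),
      Finset.sum_const, Finset.sum_const, hcard, ← hk]
    simp only [nsmul_eq_mul, smul_eq_mul, mul_one, mul_neg_one, neg_smul, one_smul]
    rw [Nat.cast_sub hkn]
    push_cast
    ring
  have hfin : (1 : ℂ) + ∑ i, (P + Q) * (u i)⁻¹ ≠ 0 := by
    rw [hsum]
    have hz0 : (1 + (n : ℤ) - 2 * (k : ℤ)) ≠ 0 := by
      obtain ⟨m, hm⟩ := hn
      omega
    have hz : (((1 + (n : ℤ) - 2 * (k : ℤ) : ℤ)) : ℂ) ≠ 0 := by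
      exact_mod_cast hz0
    intro h0
    apply hz
    push_cast
    linear_combination h0
  rw [hHd]
  simp only [Matrix.det_mul, Matrix.det_diagonal]
  refine mul_ne_zero (mul_ne_zero hv' ?_) hv'
  rw [hJ, Matrix.det_add_replicateCol_mul_replicateRow hAdet, hsmall, Matrix.det_diagonal]
  exact mul_ne_zero hu' hfin

end S15

/-- every critical point of the del Pezzo superpotential
`W(x) = Σ xⱼ + Σ 1/xⱼ + Π xⱼ + Π 1/xⱼ` on `(ℂ*)^n`, `n` even positive,
is non-degenerate. -/
theorem stmt_15 (n : ℕ) (hn : Even n) (hpos : 0 < n)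
    (W : (Fin n → ℂ) → ℂ)
    (hW : ∀ x, W x = (∑ j, x j) + (∑ j, (x j)⁻¹) + (∏ j, x j) + (∏ j, (x j)⁻¹))
    (x : Fin n → ℂ) (hx : ∀ i, x i ≠ 0)
    (hcrit : ∀ i, pgrad W x i = 0) :
    (pHess W x).det ≠ 0 := by
  apply S15.key n hn x hx
  · exact fun i => (S15.pgrad_eq W hW x hx i).symm.trans (hcrit i)
  · exact fun i j => S15.pHess_eq W hW x hx i j
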